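/- Let R be a Γ-graded von Neumann regular graded right self-injective ring and A a graded right ideal of R. Then there exists a unique graded right ideal B of R such that B is a direct summand of R as a right R-module (i.e. there is a graded right ideal C with B ∩ C = 0 and B + C = R), A ⊆ B, and A is graded essential in B. -/

import Mathlib

/- Setting: `Γ = ι` an additive abelian group, `R` a `ι`-graded ring with identity,
with homogeneous components the additive subgroups `𝒜 γ`. -/

variable {ι R : Type*}

section Defs
variable [DecidableEq ι] [AddCommGroup ι] [Ring R] (𝒜 : ι → AddSubgroup R) [GradedRing 𝒜]

/-- An element of `R` is homogeneous if it lies in some component `𝒜 γ`. -/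
def IsHomog (a : R) : Prop := ∃ γ : ι, a ∈ 𝒜 γ

/-- `R` is graded von Neumann regular: every homogeneous element has an inner inverse. -/
def GradedVNRegular : Prop := ∀ a : R, IsHomog 𝒜 a → ∃ b : R, a * b * a = a

/-- A subset of `R` is a right ideal. -/
def IsRightIdealSet (I : Set R) : Prop :=
  (0 : R) ∈ I ∧ (∀ x ∈ I, ∀ y ∈ I, x + y ∈ I) ∧ ∀ x ∈ I, ∀ r : R, x * r ∈ I

/-- A graded right ideal: a right ideal containing all homogeneous components of
its elements. -/
def IsGradedRightIdeal (I : Set R) : Prop :=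
  IsRightIdealSet I ∧ ∀ x ∈ I, ∀ γ : ι, ((DirectSum.decompose 𝒜 x γ : 𝒜 γ) : R) ∈ I

/-- `A` is graded essential in `B` (as graded right ideals): `A ⊆ B` and every nonzero
graded right ideal contained in `B` meets `A` nontrivially. -/
def GradedEssentialIn (A B : Set R) : Prop :=
  A ⊆ B ∧ ∀ J : Set R, IsGradedRightIdeal 𝒜 J → J ⊆ B → (∃ x ∈ J, x ≠ 0) →
    ∃ x, x ∈ A ∩ J ∧ x ≠ 0

/-- Graded Baer criterion: `R` is graded right self-injective. A homomorphism from a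
graded right ideal `I` to `R` is encoded as a function `f : R → R` which is additive on
`I`, right `R`-linear on `I`, and of degree `γ` on `I`. -/
def GradedSelfInjective : Prop :=
  ∀ I : Set R, IsGradedRightIdeal 𝒜 I → ∀ γ : ι, ∀ f : R → R,
    (∀ x ∈ I, ∀ y ∈ I, f (x + y) = f x + f y) →
    (∀ x ∈ I, ∀ r : R, f (x * r) = f x * r) →
    (∀ δ : ι, ∀ x ∈ I, x ∈ 𝒜 δ → f x ∈ 𝒜 (γ + δ)) →
    ∃ c ∈ 𝒜 γ, ∀ x ∈ I, f x = c * x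

end Defs
section Helpers
variable [DecidableEq ι] [AddCommGroup ι] [Ring R] (𝒜 : ι → AddSubgroup R) [GradedRing 𝒜]

open DirectSum

lemma comp_add' (x y : R) (γ : ι) :
    ((decompose 𝒜 (x + y) γ : 𝒜 γ) : R) = (decompose 𝒜 x γ : R) + (decompose 𝒜 y γ : R) := by
  rw [decompose_add, DirectSum.add_apply, AddSubgroup.coe_add]

lemma comp_sub' (x y : R) (γ : ι) :
    ((decompose 𝒜 (x - y) γ : 𝒜 γ) : R) = (decompose 𝒜 x γ : R) - (decompose 𝒜 y γ : R) := by
  rw [decompose_sub, DirectSum.sub_apply, AddSubgroup.coe_sub]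

lemma comp_sum (s : Finset ι) (g : ι → R) (hg : ∀ γ ∈ s, g γ ∈ 𝒜 γ) (δ : ι) :
    ((decompose 𝒜 (∑ γ ∈ s, g γ) δ : 𝒜 δ) : R) = if δ ∈ s then g δ else 0 := by
  rw [decompose_sum, DFinsupp.finset_sum_apply, AddSubmonoidClass.coe_finset_sum]
  have h1 : ∀ γ ∈ s, ((decompose 𝒜 (g γ) δ : 𝒜 δ) : R) = if γ = δ then g γ else 0 := by
    intro γ hγ
    by_cases h : γ = δ
    · subst h; rw [decompose_of_mem_same 𝒜 (hg γ hγ), if_pos rfl]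
    · rw [decompose_of_mem_ne 𝒜 (hg γ hγ) h, if_neg h]
  rw [Finset.sum_congr rfl h1, Finset.sum_ite_eq' s δ g]

lemma comp_index_congr (x : R) {γ δ : ι} (h : γ = δ) :
    ((decompose 𝒜 x γ : 𝒜 γ) : R) = ((decompose 𝒜 x δ : 𝒜 δ) : R) := by subst h; rfl

lemma Gcomp_mul_left {a : R} {γ : ι} (ha : a ∈ 𝒜 γ) (x : R) (δ : ι) :
    ((decompose 𝒜 (a * x) (γ + δ) : 𝒜 (γ + δ)) : R) = a * ((decompose 𝒜 x δ : 𝒜 δ) : R) := by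
  classical
  have hx : a * x = ∑ β ∈ (decompose 𝒜 x).support.map (addLeftEmbedding γ),
      a * ((decompose 𝒜 x (β - γ) : 𝒜 (β - γ)) : R) := by
    rw [Finset.sum_map]
    conv_lhs => rw [← DirectSum.sum_support_decompose 𝒜 x]
    rw [Finset.mul_sum]
    refine Finset.sum_congr rfl fun μ hμ => ?_
    have h2 : γ + μ - γ = μ := add_sub_cancel_left γ μ
    have h3 : (addLeftEmbedding γ) μ = γ + μ := rfl
    rw [h3, h2]
  have := comp_sum 𝒜 ((decompose 𝒜 x).support.map (addLeftEmbedding γ))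
    (fun β => a * ((decompose 𝒜 x (β - γ) : 𝒜 (β - γ)) : R)) ?_ (γ + δ)
  · rw [← hx] at this
    rw [this]
    by_cases h : γ + δ ∈ (decompose 𝒜 x).support.map (addLeftEmbedding γ)
    · rw [if_pos h, add_sub_cancel_left]
    · rw [if_neg h]
      have hδ : δ ∉ (decompose 𝒜 x).support := by
        intro hc
        exact h (Finset.mem_map.2 ⟨δ, hc, rfl⟩)
      rw [DFinsupp.notMem_support_iff.1 hδ]
      simp
  · intro β hβ
    obtain ⟨μ, hμ, rfl⟩ := Finset.mem_map.1 hβ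
    show a * ((decompose 𝒜 x ((addLeftEmbedding γ) μ - γ) : 𝒜 _) : R) ∈ 𝒜 ((addLeftEmbedding γ) μ)
    rw [comp_index_congr 𝒜 x (show (addLeftEmbedding γ) μ - γ = μ from add_sub_cancel_left γ μ)]
    exact SetLike.mul_mem_graded ha (SetLike.coe_mem _)

lemma Gcomp_mul_right {a : R} {γ : ι} (ha : a ∈ 𝒜 γ) (x : R) (δ : ι) :
    ((decompose 𝒜 (x * a) (δ + γ) : 𝒜 (δ + γ)) : R) = ((decompose 𝒜 x δ : 𝒜 δ) : R) * a := by
  classical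
  have hx : x * a = ∑ β ∈ (decompose 𝒜 x).support.map (addRightEmbedding γ),
      ((decompose 𝒜 x (β - γ) : 𝒜 (β - γ)) : R) * a := by
    rw [Finset.sum_map]
    conv_lhs => rw [← DirectSum.sum_support_decompose 𝒜 x]
    rw [Finset.sum_mul]
    refine Finset.sum_congr rfl fun μ hμ => ?_
    have h2 : μ + γ - γ = μ := add_sub_cancel_right μ γ
    have h3 : (addRightEmbedding γ) μ = μ + γ := rfl
    rw [h3, h2]
  have := comp_sum 𝒜 ((decompose 𝒜 x).support.map (addRightEmbedding γ))
    (fun β => ((decompose 𝒜 x (β - γ) : 𝒜 (β - γ)) : R) * a) ?_ (δ + γ)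
  · rw [← hx] at this
    rw [this]
    by_cases h : δ + γ ∈ (decompose 𝒜 x).support.map (addRightEmbedding γ)
    · rw [if_pos h, add_sub_cancel_right]
    · rw [if_neg h]
      have hδ : δ ∉ (decompose 𝒜 x).support := by
        intro hc
        exact h (Finset.mem_map.2 ⟨δ, hc, rfl⟩)
      rw [DFinsupp.notMem_support_iff.1 hδ]
      simp
  · intro β hβ
    obtain ⟨μ, hμ, rfl⟩ := Finset.mem_map.1 hβ
    show ((decompose 𝒜 x ((addRightEmbedding γ) μ - γ) : 𝒜 _) : R) * a ∈ 𝒜 ((addRightEmbedding γ) μ)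
    rw [comp_index_congr 𝒜 x (show (addRightEmbedding γ) μ - γ = μ from add_sub_cancel_right μ γ)]
    exact SetLike.mul_mem_graded (SetLike.coe_mem _) ha

end Helpers
section Aux
variable [DecidableEq ι] [AddCommGroup ι] [Ring R] (𝒜 : ι → AddSubgroup R) [GradedRing 𝒜]

open DirectSum

lemma RI.neg_mem {I : Set R} (hI : IsRightIdealSet I) {x : R} (hx : x ∈ I) : -x ∈ I := by
  have := hI.2.2 x hx (-1)
  rwa [mul_neg_one] at this

lemma RI.sub_mem {I : Set R} (hI : IsRightIdealSet I) {x y : R} (hx : x ∈ I) (hy : y ∈ I) :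
    x - y ∈ I := by
  have := hI.2.1 x hx (-y) (RI.neg_mem hI hy)
  rwa [← sub_eq_add_neg] at this

lemma RI.sum_mem {I : Set R} (hI : IsRightIdealSet I) {α : Type*} (s : Finset α) (g : α → R)
    (hg : ∀ a ∈ s, g a ∈ I) : (∑ a ∈ s, g a) ∈ I := by
  classical
  induction s using Finset.induction_on with
  | empty => simpa using hI.1
  | @insert a s ha ih =>
    rw [Finset.sum_insert ha]
    exact hI.2.1 _ (hg a (Finset.mem_insert_self a s)) _
      (ih fun b hb => hg b (Finset.mem_insert_of_mem hb))

lemma RI.mem_of_comps {I : Set R} (hI : IsRightIdealSet I) {x : R}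
    (h : ∀ γ : ι, ((decompose 𝒜 x γ : 𝒜 γ) : R) ∈ I) : x ∈ I := by
  classical
  have hs := DirectSum.sum_support_decompose 𝒜 x
  rw [← hs]
  exact RI.sum_mem hI _ _ fun γ _ => h γ

/-- The "principal" graded right ideal generated by a homogeneous element. -/
lemma principal_graded {u : R} {γ : ι} (hu : u ∈ 𝒜 γ) :
    IsGradedRightIdeal 𝒜 {y | ∃ r : R, y = u * r} := by
  refine ⟨⟨⟨0, (mul_zero u).symm⟩, ?_, ?_⟩, ?_⟩
  · rintro x ⟨r, rfl⟩ y ⟨s, rfl⟩; exact ⟨r + s, (mul_add u r s).symm⟩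
  · rintro x ⟨r, rfl⟩ t; exact ⟨r * t, mul_assoc u r t⟩
  · rintro x ⟨r, rfl⟩ β
    refine ⟨((decompose 𝒜 r (β - γ) : 𝒜 _) : R), ?_⟩
    rw [comp_index_congr 𝒜 (u * r) (show β = γ + (β - γ) by abel)]
    exact Gcomp_mul_left 𝒜 hu r (β - γ)

/-- The sum of two graded right ideals is a graded right ideal. -/
lemma sumset_graded {A D : Set R} (hA : IsGradedRightIdeal 𝒜 A) (hD : IsGradedRightIdeal 𝒜 D) :
    IsGradedRightIdeal 𝒜 {x | ∃ a ∈ A, ∃ d ∈ D, x = a + d} := by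
  refine ⟨⟨⟨0, hA.1.1, 0, hD.1.1, (add_zero 0).symm⟩, ?_, ?_⟩, ?_⟩
  · rintro x ⟨a, ha, d, hd, rfl⟩ y ⟨a', ha', d', hd', rfl⟩
    exact ⟨a + a', hA.1.2.1 a ha a' ha', d + d', hD.1.2.1 d hd d' hd', by abel⟩
  · rintro x ⟨a, ha, d, hd, rfl⟩ r
    exact ⟨a * r, hA.1.2.2 a ha r, d * r, hD.1.2.2 d hd r, add_mul a d r⟩
  · rintro x ⟨a, ha, d, hd, rfl⟩ γ
    exact ⟨_, hA.2 a ha γ, _, hD.2 d hd γ, comp_add' 𝒜 a d γ⟩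

/-- Graded regularity with a homogeneous inner inverse. -/
lemma hreg_homog (hreg : GradedVNRegular 𝒜) {z : R} {γ : ι} (hz : z ∈ 𝒜 γ) :
    ∃ w, w ∈ 𝒜 (-γ) ∧ z * w * z = z := by
  obtain ⟨b, hb⟩ := hreg z ⟨γ, hz⟩
  refine ⟨((decompose 𝒜 b (-γ) : 𝒜 _) : R), SetLike.coe_mem _, ?_⟩
  have h1 : ((decompose 𝒜 (z * (b * z)) γ : 𝒜 γ) : R) = z := by
    rw [← mul_assoc, hb, decompose_of_mem_same 𝒜 hz]
  have h2 : ((decompose 𝒜 (z * (b * z)) γ : 𝒜 γ) : R)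
      = z * ((decompose 𝒜 (b * z) (0 : ι) : 𝒜 (0 : ι)) : R) := by
    rw [comp_index_congr 𝒜 (z * (b * z)) (show γ = γ + 0 by abel)]
    exact Gcomp_mul_left 𝒜 hz (b * z) 0
  have h3 : ((decompose 𝒜 (b * z) (0 : ι) : 𝒜 (0 : ι)) : R)
      = ((decompose 𝒜 b (-γ) : 𝒜 (-γ)) : R) * z := by
    rw [comp_index_congr 𝒜 (b * z) (show (0 : ι) = -γ + γ by abel)]
    exact Gcomp_mul_right 𝒜 hz b (-γ)
  rw [mul_assoc, ← h3, ← h2, h1]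

end Aux
section Uniq
variable [DecidableEq ι] [AddCommGroup ι] [Ring R] (𝒜 : ι → AddSubgroup R) [GradedRing 𝒜]

open DirectSum

lemma key2 (hreg : GradedVNRegular 𝒜) {A B₁ B₂ C₂ : Set R}
    (hB₁ : IsGradedRightIdeal 𝒜 B₁) (hEss1 : GradedEssentialIn 𝒜 A B₁)
    (hB₂ : IsGradedRightIdeal 𝒜 B₂) (hC₂ : IsGradedRightIdeal 𝒜 C₂)
    (htriv : ∀ x, x ∈ B₂ ∩ C₂ → x = 0) (hAB₂ : A ⊆ B₂)
    {u b c : R} {δ : ι} (huB₁ : u ∈ B₁) (huδ : u ∈ 𝒜 δ)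
    (hbB : b ∈ B₂) (hcC : c ∈ C₂) (hbδ : b ∈ 𝒜 δ) (hcδ : c ∈ 𝒜 δ)
    (hubc : u = b + c) (hcne : c ≠ 0) : False := by
  obtain ⟨t, htδ, htc⟩ := hreg_homog 𝒜 hreg hcδ
  have hv : u * (t * c) = b * (t * c) + c := by
    rw [hubc, add_mul]
    congr 1
    rw [← mul_assoc, htc]
  set v := u * (t * c) with hvdef
  have hvB₁ : v ∈ B₁ := hB₁.1.2.2 u huB₁ (t * c)
  have hvδ : v ∈ 𝒜 (δ + (-δ + δ)) :=
    SetLike.mul_mem_graded huδ (SetLike.mul_mem_graded htδ hcδ)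
  have hvne : v ≠ 0 := by
    intro h0
    apply hcne
    have hc' : c = -(b * (t * c)) := by
      have h4 : b * (t * c) + c = 0 := by rw [← hv, h0]
      exact (neg_eq_of_add_eq_zero_left h4).symm ▸ (neg_neg _).symm
    exact htriv c ⟨by rw [hc']; exact RI.neg_mem hB₂.1 (hB₂.1.2.2 b hbB (t * c)), hcC⟩
  have hJ := principal_graded 𝒜 hvδ
  obtain ⟨a, ⟨haA, ⟨r, har⟩⟩, hane⟩ := hEss1.2 _ hJ
    (by rintro y ⟨r, rfl⟩; exact hB₁.1.2.2 v hvB₁ r)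
    ⟨v, ⟨1, (mul_one v).symm⟩, hvne⟩
  have hcrB : c * r ∈ B₂ := by
    have h1 : a ∈ B₂ := hAB₂ haA
    have h2 : b * ((t * c) * r) ∈ B₂ := hB₂.1.2.2 b hbB _
    have h3 : c * r = a - b * ((t * c) * r) := by
      rw [har, hv, add_mul, mul_assoc]
      abel
    rw [h3]
    exact RI.sub_mem hB₂.1 h1 h2
  have hcr0 : c * r = 0 := htriv _ ⟨hcrB, hC₂.1.2.2 c hcC r⟩
  apply hane
  rw [har, hvdef, mul_assoc, mul_assoc t c r, hcr0, mul_zero, mul_zero]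

lemma ess_summand_subset (hreg : GradedVNRegular 𝒜) {A B₁ B₂ C₂ : Set R}
    (hB₁ : IsGradedRightIdeal 𝒜 B₁) (hEss1 : GradedEssentialIn 𝒜 A B₁)
    (hB₂ : IsGradedRightIdeal 𝒜 B₂) (hC₂ : IsGradedRightIdeal 𝒜 C₂)
    (htriv : ∀ x, x ∈ B₂ ∩ C₂ → x = 0)
    (hdec : ∀ x : R, ∃ b ∈ B₂, ∃ c ∈ C₂, x = b + c)
    (hAB₂ : A ⊆ B₂) : B₁ ⊆ B₂ := by
  intro x hx
  refine RI.mem_of_comps 𝒜 hB₂.1 fun δ => ?_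
  have huB₁ : ((decompose 𝒜 x δ : 𝒜 δ) : R) ∈ B₁ := hB₁.2 x hx δ
  have huδ : ((decompose 𝒜 x δ : 𝒜 δ) : R) ∈ 𝒜 δ := SetLike.coe_mem _
  obtain ⟨b0, hb0, c0, hc0, hbc⟩ := hdec ((decompose 𝒜 x δ : 𝒜 δ) : R)
  have hbB : ((decompose 𝒜 b0 δ : 𝒜 δ) : R) ∈ B₂ := hB₂.2 _ hb0 δ
  have hcC : ((decompose 𝒜 c0 δ : 𝒜 δ) : R) ∈ C₂ := hC₂.2 _ hc0 δ
  have hu2 : ((decompose 𝒜 x δ : 𝒜 δ) : R)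
      = ((decompose 𝒜 b0 δ : 𝒜 δ) : R) + ((decompose 𝒜 c0 δ : 𝒜 δ) : R) := by
    conv_lhs => rw [← decompose_of_mem_same 𝒜 huδ, hbc]
    exact comp_add' 𝒜 b0 c0 δ
  by_cases hc0' : ((decompose 𝒜 c0 δ : 𝒜 δ) : R) = 0
  · rw [hu2, hc0', add_zero]
    exact hbB
  · exact absurd (key2 𝒜 hreg hB₁ hEss1 hB₂ hC₂ htriv hAB₂ huB₁ huδ hbB hcC
      (SetLike.coe_mem _) (SetLike.coe_mem _) hu2 hc0') not_false

end Uniq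
/-- Let `R` be a graded von Neumann regular graded right self-injective
ring and `A` a graded right ideal. Then there is a unique graded right ideal `B` of `R`
which is a direct summand of `R` (as a right `R`-module, with a graded complement) such
that `A ⊆ B` and `A` is graded essential in `B`. -/
theorem unique_essential_closure_summand
    [DecidableEq ι] [AddCommGroup ι] [Ring R] (𝒜 : ι → AddSubgroup R) [GradedRing 𝒜]
    (hreg : GradedVNRegular 𝒜) (hinj : GradedSelfInjective 𝒜)
    (A : Set R) (hA : IsGradedRightIdeal 𝒜 A) :
    ∃! B : Set R, IsGradedRightIdeal 𝒜 B ∧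
      (∃ C : Set R, IsGradedRightIdeal 𝒜 C ∧ (∀ x, x ∈ B ∩ C → x = 0) ∧
        ∀ x : R, ∃ b ∈ B, ∃ c ∈ C, x = b + c) ∧
      A ⊆ B ∧ GradedEssentialIn 𝒜 A B := by
  classical
  open DirectSum in
  -- Zorn's lemma: a maximal graded right ideal D with A ∩ D = 0
  have h0S : ({0} : Set R) ∈ {D : Set R | IsGradedRightIdeal 𝒜 D ∧ ∀ x ∈ A ∩ D, x = 0} := by
    refine ⟨⟨⟨rfl, ?_, ?_⟩, ?_⟩, ?_⟩
    · rintro x rfl y rfl; simp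
    · rintro x rfl r; simp
    · rintro x rfl γ; simp
    · rintro x ⟨-, rfl⟩; rfl
  have hchain : ∀ c ⊆ {D : Set R | IsGradedRightIdeal 𝒜 D ∧ ∀ x ∈ A ∩ D, x = 0},
      IsChain (· ⊆ ·) c → c.Nonempty →
      ∃ ub ∈ {D : Set R | IsGradedRightIdeal 𝒜 D ∧ ∀ x ∈ A ∩ D, x = 0}, ∀ s ∈ c, s ⊆ ub := by
    rintro c hcS hch ⟨D₀, hD₀⟩
    refine ⟨⋃₀ c, ⟨⟨⟨⟨D₀, hD₀, (hcS hD₀).1.1.1⟩, ?_, ?_⟩, ?_⟩, ?_⟩,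
      fun s hs => Set.subset_sUnion_of_mem hs⟩
    · rintro x ⟨Dx, hDx, hxDx⟩ y ⟨Dy, hDy, hyDy⟩
      rcases hch.total hDx hDy with h | h
      · exact ⟨Dy, hDy, (hcS hDy).1.1.2.1 x (h hxDx) y hyDy⟩
      · exact ⟨Dx, hDx, (hcS hDx).1.1.2.1 x hxDx y (h hyDy)⟩
    · rintro x ⟨Dx, hDx, hxDx⟩ r; exact ⟨Dx, hDx, (hcS hDx).1.1.2.2 x hxDx r⟩
    · rintro x ⟨Dx, hDx, hxDx⟩ γ; exact ⟨Dx, hDx, (hcS hDx).1.2 x hxDx γ⟩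
    · rintro x ⟨hxA, Dx, hDx, hxDx⟩; exact (hcS hDx).2 x ⟨hxA, hxDx⟩
  obtain ⟨D, hD0sub, hDmax⟩ := zorn_subset_nonempty
      {D : Set R | IsGradedRightIdeal 𝒜 D ∧ ∀ x ∈ A ∩ D, x = 0} hchain {0} h0S
  have hD : IsGradedRightIdeal 𝒜 D := hDmax.1.1
  have hADtriv : ∀ x ∈ A ∩ D, x = 0 := hDmax.1.2
  have hI : IsGradedRightIdeal 𝒜 {x : R | ∃ a ∈ A, ∃ d ∈ D, x = a + d} :=
    sumset_graded 𝒜 hA hD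
  -- A + D is graded essential in R
  have hess : ∀ J : Set R, IsGradedRightIdeal 𝒜 J → (∃ x ∈ J, x ≠ 0) →
      ∃ y, y ∈ {x : R | ∃ a ∈ A, ∃ d ∈ D, x = a + d} ∩ J ∧ y ≠ 0 := by
    rintro J hJ ⟨x0, hx0J, hx0ne⟩
    by_contra hcon
    push_neg at hcon
    have hD'S : {x : R | ∃ d ∈ D, ∃ j ∈ J, x = d + j}
        ∈ {D : Set R | IsGradedRightIdeal 𝒜 D ∧ ∀ x ∈ A ∩ D, x = 0} := by
      refine ⟨sumset_graded 𝒜 hD hJ, ?_⟩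
      rintro x ⟨hxA, d, hd, j, hj, hxdj⟩
      have hjeq : j = x + -d := by rw [hxdj]; abel
      have hjI : j ∈ {x : R | ∃ a ∈ A, ∃ d ∈ D, x = a + d} :=
        ⟨x, hxA, -d, RI.neg_mem hD.1 hd, hjeq⟩
      have hj0 : j = 0 := hcon j ⟨hjI, hj⟩
      have hxd : x = d := by rw [hxdj, hj0, add_zero]
      exact hADtriv x ⟨hxA, hxd ▸ hd⟩
    have hDD' : D ⊆ {x : R | ∃ d ∈ D, ∃ j ∈ J, x = d + j} :=
      fun d hd => ⟨d, hd, 0, hJ.1.1, (add_zero d).symm⟩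
    have hsub : {x : R | ∃ d ∈ D, ∃ j ∈ J, x = d + j} ⊆ D := hDmax.2 hD'S hDD'
    have hJD : J ⊆ D := fun j hj => hsub ⟨0, hD.1.1, j, hj, (zero_add j).symm⟩
    exact hx0ne (hcon x0 ⟨⟨0, hA.1.1, x0, hJD hx0J, (zero_add x0).symm⟩, hx0J⟩)
  -- the projection onto A along D, as a function
  set f : R → R := fun x =>
    if h : ∃ a ∈ A, ∃ d ∈ D, x = a + d then h.choose else 0 with hfdef
  have funiq : ∀ x a d : R, a ∈ A → d ∈ D → x = a + d → f x = a := by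
    intro x a d ha hd hxad
    have hex : ∃ a ∈ A, ∃ d ∈ D, x = a + d := ⟨a, ha, d, hd, hxad⟩
    have hfx : f x = hex.choose := by simp only [hfdef]; rw [dif_pos hex]
    rw [hfx]
    obtain ⟨ha', d', hd', hx'⟩ := hex.choose_spec
    generalize hex.choose = q at ha' hx' ⊢
    have h3 : a + d = q + d' := by rw [← hxad]; exact hx'
    have h2 : q - a = d - d' := by
      rw [sub_eq_sub_iff_add_eq_add, ← h3]
      exact add_comm a d
    have h1 : q - a ∈ A := RI.sub_mem hA.1 ha' ha
    have h4 : q - a ∈ D := h2 ▸ RI.sub_mem hD.1 hd hd'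
    have h5 := hADtriv _ ⟨h1, h4⟩
    exact sub_eq_zero.1 h5
  -- Baer criterion at degree 0
  obtain ⟨e, he0, hef⟩ := hinj {x : R | ∃ a ∈ A, ∃ d ∈ D, x = a + d} hI 0 f
    (by
      rintro x ⟨a, ha, d, hd, rfl⟩ y ⟨a', ha', d', hd', rfl⟩
      rw [funiq _ a d ha hd rfl, funiq _ a' d' ha' hd' rfl,
        funiq _ (a + a') (d + d') (hA.1.2.1 a ha a' ha') (hD.1.2.1 d hd d' hd') (by abel)])
    (by
      rintro x ⟨a, ha, d, hd, rfl⟩ r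
      rw [funiq _ a d ha hd rfl,
        funiq _ (a * r) (d * r) (hA.1.2.2 a ha r) (hD.1.2.2 d hd r) (add_mul a d r)])
    (by
      rintro δ x ⟨a, ha, d, hd, rfl⟩ hxδ
      have heq : a + d = ((DirectSum.decompose 𝒜 a δ : 𝒜 δ) : R)
          + ((DirectSum.decompose 𝒜 d δ : 𝒜 δ) : R) := by
        conv_lhs => rw [← DirectSum.decompose_of_mem_same 𝒜 hxδ]
        exact comp_add' 𝒜 a d δ
      rw [funiq _ _ _ (hA.2 a ha δ) (hD.2 d hd δ) heq, zero_add]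
      exact SetLike.coe_mem _)
  have hea : ∀ a ∈ A, e * a = a := by
    intro a ha
    have h1 := hef a ⟨a, ha, 0, hD.1.1, (add_zero a).symm⟩
    rw [funiq a a 0 ha hD.1.1 (add_zero a).symm] at h1
    exact h1.symm
  have hed : ∀ d ∈ D, e * d = 0 := by
    intro d hd
    have h1 := hef d ⟨0, hA.1.1, d, hd, (zero_add d).symm⟩
    rw [funiq d 0 d hA.1.1 hd (zero_add d).symm] at h1
    exact h1.symm
  -- e is idempotent
  have hee : e * e = e := by
    by_contra hne
    have hz0 : e * e - e ∈ 𝒜 (0 : ι) := by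
      refine AddSubgroup.sub_mem _ ?_ he0
      have := SetLike.mul_mem_graded he0 he0
      rwa [add_zero] at this
    have hzne : e * e - e ≠ 0 := sub_ne_zero_of_ne hne
    obtain ⟨w, hw, hwz⟩ := hreg_homog 𝒜 hreg hz0
    have hwzmem : w * (e * e - e) ∈ 𝒜 ((-0 : ι) + 0) := SetLike.mul_mem_graded hw hz0
    have hJ := principal_graded 𝒜 hwzmem
    have hwzne : w * (e * e - e) ≠ 0 := by
      intro h0
      apply hzne
      calc e * e - e = (e * e - e) * w * (e * e - e) := hwz.symm
        _ = (e * e - e) * (w * (e * e - e)) := mul_assoc _ _ _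
        _ = 0 := by rw [h0, mul_zero]
    obtain ⟨y, ⟨hyI, ⟨r, hyr⟩⟩, hyne⟩ := hess _ hJ
      ⟨w * (e * e - e), ⟨1, (mul_one _).symm⟩, hwzne⟩
    have hzI : (e * e - e) * y = 0 := by
      obtain ⟨a, ha, d, hd, rfl⟩ := hyI
      have hza : (e * e - e) * a = 0 := by
        rw [sub_mul, mul_assoc, hea a ha, hea a ha, sub_self]
      have hzd : (e * e - e) * d = 0 := by
        rw [sub_mul, mul_assoc, hed d hd, mul_zero, sub_self]
      rw [mul_add, hza, hzd, add_zero]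
    rw [hyr, ← mul_assoc, ← mul_assoc, hwz] at hzI
    apply hyne
    rw [hyr, mul_assoc, hzI, mul_zero]
  -- the summand B = eR with complement C = (1-e)R
  have hBg : IsGradedRightIdeal 𝒜 {y : R | ∃ r : R, y = e * r} := principal_graded 𝒜 he0
  have hCg : IsGradedRightIdeal 𝒜 {y : R | ∃ r : R, y = r - e * r} := by
    refine ⟨⟨⟨0, by rw [mul_zero, sub_zero]⟩, ?_, ?_⟩, ?_⟩
    · rintro x ⟨r, rfl⟩ y ⟨s, rfl⟩; exact ⟨r + s, by rw [mul_add]; abel⟩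
    · rintro x ⟨r, rfl⟩ t; exact ⟨r * t, by rw [sub_mul, mul_assoc]⟩
    · rintro x ⟨r, rfl⟩ γ
      refine ⟨((DirectSum.decompose 𝒜 r γ : 𝒜 γ) : R), ?_⟩
      rw [comp_sub' 𝒜 r (e * r) γ]
      congr 1
      rw [comp_index_congr 𝒜 (e * r) (show γ = 0 + γ by abel)]
      exact Gcomp_mul_left 𝒜 he0 r γ
  have hBC : ∀ x, x ∈ {y : R | ∃ r : R, y = e * r} ∩ {y : R | ∃ r : R, y = r - e * r} → x = 0 := by
    rintro x ⟨⟨r, rfl⟩, ⟨s, hs⟩⟩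
    have h1 : e * (e * r) = e * r := by rw [← mul_assoc, hee]
    have h2 : e * (e * r) = 0 := by rw [hs, mul_sub, ← mul_assoc, hee, sub_self]
    rw [← h1, h2]
  have hdec : ∀ x : R, ∃ b ∈ {y : R | ∃ r : R, y = e * r},
      ∃ c ∈ {y : R | ∃ r : R, y = r - e * r}, x = b + c :=
    fun x => ⟨e * x, ⟨x, rfl⟩, x - e * x, ⟨x, rfl⟩, by abel⟩
  have hAB : A ⊆ {y : R | ∃ r : R, y = e * r} := fun a ha => ⟨a, (hea a ha).symm⟩
  have hEss : GradedEssentialIn 𝒜 A {y : R | ∃ r : R, y = e * r} := by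
    refine ⟨hAB, ?_⟩
    intro J hJg hJB hJne
    obtain ⟨y, ⟨hyI, hyJ⟩, hyne⟩ := hess J hJg hJne
    obtain ⟨a, ha, d, hd, hyad⟩ := hyI
    have hey : e * y = y := by
      obtain ⟨r, hr⟩ := hJB hyJ
      rw [hr, ← mul_assoc, hee]
    have hya : y = a := by rw [← hey, hyad, mul_add, hea a ha, hed d hd, add_zero]
    exact ⟨y, ⟨hya ▸ ha, hyJ⟩, hyne⟩
  refine ⟨{y : R | ∃ r : R, y = e * r},
    ⟨hBg, ⟨{y : R | ∃ r : R, y = r - e * r}, hCg, hBC, hdec⟩, hAB, hEss⟩, ?_⟩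
  rintro B' ⟨hB'g, ⟨C', hC'g, hB'C', hdec'⟩, hAB', hEss'⟩
  apply Set.Subset.antisymm
  · exact ess_summand_subset 𝒜 hreg hB'g hEss' hBg hCg hBC hdec hAB
  · exact ess_summand_subset 𝒜 hreg hBg hEss hB'g hC'g hB'C' hdec' hAB'
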